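/- Let S be a commutative ring in which 2 is a nonzerodivisor, let ū ∈ S[[u]] be a power series with zero constant term satisfying ū ≡ −u mod (u²), and let σ : S[[u]] → S[[u]] be the S-algebra endomorphism given by substituting u ↦ ū; assume σ is an involution, i.e. σ(ū) = u. Assume further that there exists a ∈ S whose image in S/2S is a nonzerodivisor and such that ū ≡ u + a·u² modulo the ideal of S[[u]] generated by 2 and u³. Then for a power series f ∈ S[[u]], one has σ(f) = −f if and only if f lies in (u − ū)·S[[w]], where S[[w]] denotes the image of the substitution homomorphism S[[t]] → S[[u]] sending t to w := u·ū. -/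

import Mathlib

open PowerSeries

/-- Substitution of the power series `w` (with zero constant term) into the power
series `f`: the coefficient of `u^n` in `f(w)` is `∑_{k ≤ n} f_k · (w^k)_n`,
which is the usual composition of formal power series. -/
noncomputable def PowerSeries.substInto {S : Type*} [CommRing S] (w f : PowerSeries S) :
    PowerSeries S :=
  PowerSeries.mk fun n =>
    ∑ k ∈ Finset.range (n + 1), PowerSeries.coeff (R := S) k f * PowerSeries.coeff (R := S) n (w ^ k)

open Finset

namespace AntiFixAux
variable {S : Type*} [CommRing S]

lemma coeff_substInto (w f : PowerSeries S) (n : ℕ) :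
    coeff (R := S) n (substInto w f) = ∑ k ∈ range (n + 1), coeff (R := S) k f * coeff (R := S) n (w ^ k) :=
  coeff_mk _ _

lemma coeff_pow_zero {w : PowerSeries S} (hw : constantCoeff (R := S) w = 0) {n k : ℕ} (h : n < k) :
    coeff (R := S) n (w ^ k) = 0 :=
  X_pow_dvd_iff.mp (pow_dvd_pow_of_dvd (X_dvd_iff.mpr hw) k) n h

lemma substInto_mul {w : PowerSeries S} (hw : constantCoeff (R := S) w = 0) (f g : PowerSeries S) :
    substInto w (f * g) = substInto w f * substInto w g := by
  ext n
  have key : ∀ u i : ℕ, u < i → coeff (R := S) u (w ^ i) = 0 := fun u i h => coeff_pow_zero hw h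
  -- target value
  have RHS : coeff (R := S) n (substInto w f * substInto w g) =
      ∑ p ∈ range (n + 1) ×ˢ range (n + 1),
        coeff (R := S) p.1 f * coeff (R := S) p.2 g * coeff (R := S) n (w ^ (p.1 + p.2)) := by
    rw [coeff_mul]
    have step1 : ∀ p ∈ antidiagonal n,
        coeff (R := S) p.1 (substInto w f) * coeff (R := S) p.2 (substInto w g) =
        ∑ q ∈ range (n + 1) ×ˢ range (n + 1),
          (coeff (R := S) q.1 f * coeff (R := S) p.1 (w ^ q.1)) * (coeff (R := S) q.2 g * coeff (R := S) p.2 (w ^ q.2)) := by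
      intro p hp
      have hp' := Finset.HasAntidiagonal.mem_antidiagonal.mp hp
      rw [coeff_substInto, coeff_substInto]
      have e1 : ∑ k ∈ range (p.1 + 1), coeff (R := S) k f * coeff (R := S) p.1 (w ^ k) =
          ∑ k ∈ range (n + 1), coeff (R := S) k f * coeff (R := S) p.1 (w ^ k) := by
        apply Finset.sum_subset
        · exact Finset.range_subset_range.mpr (by omega)
        · intro k _ hk
          have : p.1 < k := by simp only [Finset.mem_range] at hk ⊢; omega
          rw [key _ _ this, mul_zero]
      have e2 : ∑ k ∈ range (p.2 + 1), coeff (R := S) k g * coeff (R := S) p.2 (w ^ k) =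
          ∑ k ∈ range (n + 1), coeff (R := S) k g * coeff (R := S) p.2 (w ^ k) := by
        apply Finset.sum_subset
        · exact Finset.range_subset_range.mpr (by omega)
        · intro k _ hk
          have : p.2 < k := by simp only [Finset.mem_range] at hk ⊢; omega
          rw [key _ _ this, mul_zero]
      rw [e1, e2, Finset.sum_mul_sum, ← Finset.sum_product']
    rw [Finset.sum_congr rfl step1, Finset.sum_comm]
    refine Finset.sum_congr rfl fun q _ => ?_
    have : ∑ p ∈ antidiagonal n,
        (coeff (R := S) q.1 f * coeff (R := S) p.1 (w ^ q.1)) * (coeff (R := S) q.2 g * coeff (R := S) p.2 (w ^ q.2)) =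
        coeff (R := S) q.1 f * coeff (R := S) q.2 g *
          ∑ p ∈ antidiagonal n, coeff (R := S) p.1 (w ^ q.1) * coeff (R := S) p.2 (w ^ q.2) := by
      rw [Finset.mul_sum]; exact Finset.sum_congr rfl fun p _ => by ring
    rw [this, ← coeff_mul, ← pow_add]
  rw [RHS, coeff_substInto]
  -- LHS as triangle sum
  have LHS : ∑ k ∈ range (n + 1), coeff (R := S) k (f * g) * coeff (R := S) n (w ^ k) =
      ∑ k ∈ range (n + 1), ∑ p ∈ antidiagonal k,
        coeff (R := S) p.1 f * coeff (R := S) p.2 g * coeff (R := S) n (w ^ (p.1 + p.2)) := by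
    refine Finset.sum_congr rfl fun k _ => ?_
    rw [coeff_mul, Finset.sum_mul]
    exact Finset.sum_congr rfl fun p hp => by
      rw [Finset.HasAntidiagonal.mem_antidiagonal.mp hp]
  rw [LHS, ← Finset.sum_biUnion]
  · apply Finset.sum_subset
    · intro p hp
      simp only [Finset.mem_biUnion, Finset.mem_range, Finset.HasAntidiagonal.mem_antidiagonal] at hp
      obtain ⟨k, hk, hpk⟩ := hp
      simp only [Finset.mem_product, Finset.mem_range]
      omega
    · intro p _ hp
      simp only [Finset.mem_biUnion, Finset.mem_range, Finset.HasAntidiagonal.mem_antidiagonal] at hp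
      have : n < p.1 + p.2 := by
        by_contra h
        exact hp ⟨p.1 + p.2, by omega, rfl⟩
      rw [key _ _ this, mul_zero]
  · intro i _ j _ hij
    simp only [Function.onFun, Finset.disjoint_left]
    intro p hpi hpj
    rw [Finset.HasAntidiagonal.mem_antidiagonal] at hpi hpj
    exact hij (hpi ▸ hpj)

lemma substInto_add (w f g : PowerSeries S) :
    substInto w (f + g) = substInto w f + substInto w g := by
  ext n; simp [coeff_substInto, add_mul, Finset.sum_add_distrib]

lemma substInto_zero (w : PowerSeries S) : substInto w 0 = 0 := by
  ext n; simp [coeff_substInto]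

lemma substInto_one (w : PowerSeries S) : substInto w 1 = 1 := by
  ext n
  rw [coeff_substInto]
  rw [Finset.sum_eq_single 0]
  · simp
  · intro k _ hk; simp [coeff_one, hk]
  · simp

lemma substInto_X {w : PowerSeries S} (hw : constantCoeff (R := S) w = 0) :
    substInto w X = w := by
  ext n
  rw [coeff_substInto]
  rcases n with _ | m
  · simpa using hw.symm
  · rw [Finset.sum_eq_single 1]
    · simp
    · intro k _ hk; simp [coeff_X, hk]
    · intro h; exact absurd (Finset.mem_range.mpr (by omega)) h

/-- The substitution ring homomorphism. -/
noncomputable def substHom (w : PowerSeries S) (hw : constantCoeff (R := S) w = 0) :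
    PowerSeries S →+* PowerSeries S where
  toFun := substInto w
  map_one' := substInto_one w
  map_mul' := substInto_mul hw
  map_zero' := substInto_zero w
  map_add' := substInto_add w

@[simp] lemma substHom_apply {w : PowerSeries S} (hw : constantCoeff (R := S) w = 0)
    (f : PowerSeries S) : substHom w hw f = substInto w f := rfl

lemma substInto_C {w : PowerSeries S} (c : S) : substInto w (C (R := S) c) = C (R := S) c := by
  ext n
  rw [coeff_substInto, Finset.sum_eq_single 0]
  · simp [coeff_C, coeff_one]
  · intro k _ hk; simp [coeff_C, hk]
  · simp

lemma substInto_sub {w : PowerSeries S} (hw : constantCoeff (R := S) w = 0) (f g : PowerSeries S) :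
    substInto w (f - g) = substInto w f - substInto w g :=
  map_sub (substHom w hw) f g

/-- Continuity: if all coefficients of `d` below `N` vanish then so do those of
`substInto w d`. -/
lemma coeff_substInto_eq_zero {w d : PowerSeries S} {N : ℕ}
    (hd : ∀ k < N, coeff (R := S) k d = 0) {n : ℕ} (hn : n < N) :
    coeff (R := S) n (substInto w d) = 0 := by
  rw [coeff_substInto]
  refine Finset.sum_eq_zero fun k hk => ?_
  rw [hd k (by simp only [Finset.mem_range] at hk; omega), zero_mul]

/-- Below degree `N`, `substInto w g` agrees with the partial sum `∑_{k<N} g_k w^k`. -/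
lemma coeff_substInto_partial {w : PowerSeries S} (hw : constantCoeff (R := S) w = 0)
    (g : PowerSeries S) {n N : ℕ} (hn : n < N) :
    coeff (R := S) n (substInto w g) = coeff (R := S) n (∑ k ∈ range N, C (R := S) (coeff (R := S) k g) * w ^ k) := by
  rw [coeff_substInto, map_sum]
  simp only [coeff_C_mul]
  rw [Finset.sum_subset (Finset.range_subset_range.mpr (by omega : n + 1 ≤ N))]
  intro k _ hk
  rw [coeff_pow_zero hw (by simp only [Finset.mem_range] at hk ⊢; omega), mul_zero]

/-- If `σ = substInto ub` fixes `w`, it fixes everything of the form `g(w)`. -/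
lemma substInto_fix {ub w : PowerSeries S} (hub : constantCoeff (R := S) ub = 0)
    (hw : constantCoeff (R := S) w = 0) (hfix : substInto ub w = w) (g : PowerSeries S) :
    substInto ub (substInto w g) = substInto w g := by
  ext n
  set B : PowerSeries S := ∑ k ∈ range (n + 1), C (R := S) (coeff (R := S) k g) * w ^ k with hB
  have hd : ∀ k < n + 1, coeff (R := S) k (substInto w g - B) = 0 := fun k hk => by
    rw [map_sub, coeff_substInto_partial hw g hk, sub_self]
  have h1 : coeff (R := S) n (substInto ub (substInto w g - B)) = 0 :=
    coeff_substInto_eq_zero hd (Nat.lt_succ_self n)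
  have h2 : substInto ub (substInto w g) = substInto ub B + substInto ub (substInto w g - B) := by
    rw [← substInto_add, add_sub_cancel]
  have h3 : substInto ub B = B := by
    rw [hB, show substInto ub (∑ k ∈ range (n + 1), C (R := S) (coeff (R := S) k g) * w ^ k) =
        substHom ub hub (∑ k ∈ range (n + 1), C (R := S) (coeff (R := S) k g) * w ^ k) from rfl, map_sum]
    refine Finset.sum_congr rfl fun k _ => ?_
    rw [map_mul, map_pow, substHom_apply, substHom_apply, substInto_C, hfix]
  rw [h2, map_add, h1, add_zero, h3, coeff_substInto_partial hw g (Nat.lt_succ_self n), hB]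

/-! ### Decomposition `f = P(w) + X·Q(w)` for `w = X²·v`, `v` a unit -/

/-- Exact division by `X²`. -/
noncomputable def divX2 (F : PowerSeries S) : PowerSeries S := mk fun n => coeff (R := S) (n + 2) F

lemma X_sq_mul_divX2 {F : PowerSeries S} (h0 : coeff (R := S) 0 F = 0) (h1 : coeff (R := S) 1 F = 0) :
    X ^ 2 * divX2 F = F := by
  ext n
  rw [coeff_X_pow_mul']
  rcases Nat.lt_or_ge n 2 with h | h
  · interval_cases n <;> simp [h0, h1]
  · rw [if_pos h, divX2, coeff_mk, show n - 2 + 2 = n by omega]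

section Decomp

variable {w v vinv : PowerSeries S} (hv : w = X ^ 2 * v) (hvc : constantCoeff (R := S) v = -1)

lemma hw0' (hv : w = X ^ 2 * v) : constantCoeff (R := S) w = 0 := by
  rw [hv, map_mul, map_pow, constantCoeff_X]; ring

lemma coeff_w_pow_lt (hv : w = X ^ 2 * v) {j k : ℕ} (h : j < 2 * k) : coeff (R := S) j (w ^ k) = 0 := by
  have : (X : PowerSeries S) ^ (2 * k) ∣ w ^ k := by
    rw [hv, mul_pow, ← pow_mul]
    exact Dvd.intro _ rfl
  exact X_pow_dvd_iff.mp this j h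

lemma coeff_w_pow_diag (hv : w = X ^ 2 * v) (hvc : constantCoeff (R := S) v = -1) (k : ℕ) :
    coeff (R := S) (2 * k) (w ^ k) = (-1) ^ k := by
  rw [hv, mul_pow, ← pow_mul, ← hvc, ← map_pow]
  have := coeff_X_pow_mul (v ^ k) (2 * k) 0
  rw [zero_add] at this
  rw [this, coeff_zero_eq_constantCoeff]

/-- The sequence of residuals in the division process. -/
noncomputable def Fseq (vinv f : PowerSeries S) : ℕ → PowerSeries S
  | 0 => f
  | n + 1 =>
      divX2 (Fseq vinv f n - C (R := S) (coeff (R := S) 0 (Fseq vinv f n))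
        - C (R := S) (coeff (R := S) 1 (Fseq vinv f n)) * X) * vinv

lemma Fseq_step (hv : w = X ^ 2 * v) (hvinv : v * vinv = 1) (f : PowerSeries S) (n : ℕ) :
    Fseq vinv f n = C (R := S) (coeff (R := S) 0 (Fseq vinv f n)) + C (R := S) (coeff (R := S) 1 (Fseq vinv f n)) * X
      + w * Fseq vinv f (n + 1) := by
  set F := Fseq vinv f n with hF
  set D := F - C (R := S) (coeff (R := S) 0 F) - C (R := S) (coeff (R := S) 1 F) * X with hD
  have hD0 : coeff (R := S) 0 D = 0 := by simp [hD, coeff_C]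
  have hD1 : coeff (R := S) 1 D = 0 := by simp [hD, coeff_C, coeff_one]
  have : w * Fseq vinv f (n + 1) = D := by
    show w * (divX2 D * vinv) = D
    calc w * (divX2 D * vinv) = (X ^ 2 * divX2 D) * (v * vinv) := by rw [hv]; ring
    _ = D := by rw [hvinv, mul_one, X_sq_mul_divX2 hD0 hD1]
  rw [this, hD]; ring

lemma Fseq_partial (hv : w = X ^ 2 * v) (hvinv : v * vinv = 1) (f : PowerSeries S) (N : ℕ) :
    f = (∑ k ∈ range N, (C (R := S) (coeff (R := S) 0 (Fseq vinv f k))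
          + C (R := S) (coeff (R := S) 1 (Fseq vinv f k)) * X) * w ^ k) + Fseq vinv f N * w ^ N := by
  induction N with
  | zero => simp [Fseq]
  | succ N ih =>
      rw [Finset.sum_range_succ]
      nth_rewrite 1 [ih]
      conv_lhs => rw [Fseq_step hv hvinv f N]
      ring

/-- Existence of the decomposition. -/
lemma exists_decomp (hv : w = X ^ 2 * v) (hvinv : v * vinv = 1) (f : PowerSeries S) :
    ∃ P Q : PowerSeries S, f = substInto w P + X * substInto w Q := by
  refine ⟨mk fun k => coeff (R := S) 0 (Fseq vinv f k), mk fun k => coeff (R := S) 1 (Fseq vinv f k), ?_⟩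
  have hw : constantCoeff (R := S) w = 0 := hw0' hv
  ext n
  conv_lhs => rw [Fseq_partial hv hvinv f (n + 1)]
  rw [map_add, map_add]
  have hrem : coeff (R := S) n (Fseq vinv f (n + 1) * w ^ (n + 1)) = 0 := by
    have : (X : PowerSeries S) ^ (2 * (n + 1)) ∣ Fseq vinv f (n + 1) * w ^ (n + 1) := by
      rw [hv, mul_pow, ← pow_mul]
      exact ⟨Fseq vinv f (n + 1) * v ^ (n + 1), by ring⟩
    exact X_pow_dvd_iff.mp this n (by omega)
  rw [hrem, add_zero, map_sum]
  have hXQ : coeff (R := S) n (X * substInto w (mk fun k => coeff (R := S) 1 (Fseq vinv f k))) =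
      ∑ k ∈ range (n + 1), coeff (R := S) 1 (Fseq vinv f k) * coeff (R := S) n (X * w ^ k) := by
    rcases n with _ | m
    · simp [coeff_zero_eq_constantCoeff, map_mul, constantCoeff_X]
    · simp only [coeff_succ_X_mul]
      rw [coeff_substInto]
      simp only [coeff_mk]
      conv_rhs => rw [Finset.sum_range_succ]
      rw [coeff_pow_zero hw (Nat.lt_succ_self m), mul_zero, add_zero]
  rw [hXQ, coeff_substInto]
  simp only [coeff_mk]
  rw [← Finset.sum_add_distrib]
  refine Finset.sum_congr rfl fun k _ => ?_
  rw [add_mul, map_add, coeff_C_mul, mul_assoc, coeff_C_mul]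

/-- Uniqueness of the decomposition: coefficients vanish by strong induction. -/
lemma decomp_unique (hv : w = X ^ 2 * v) (hvc : constantCoeff (R := S) v = -1)
    {P Q : PowerSeries S} (h : substInto w P + X * substInto w Q = 0) :
    P = 0 ∧ Q = 0 := by
  have hw : constantCoeff (R := S) w = 0 := hw0' hv
  have key : ∀ m : ℕ, coeff (R := S) m P = 0 ∧ coeff (R := S) m Q = 0 := by
    intro m
    induction m using Nat.strong_induction_on with
    | _ m IH =>
      have neg_cancel : ∀ x : S, (-1 : S) ^ m * x = 0 → x = 0 := by
        intro x hx
        have := congrArg (fun y => (-1 : S) ^ m * y) hx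
        simpa [← mul_assoc, ← mul_pow] using this
      have hP : coeff (R := S) m P = 0 := by
        have h2m := congrArg (coeff (R := S) (2 * m)) h
        rw [map_add, map_zero, coeff_substInto] at h2m
        have e1 : ∑ k ∈ range (2 * m + 1), coeff (R := S) k P * coeff (R := S) (2 * m) (w ^ k) =
            coeff (R := S) m P * (-1) ^ m := by
          rw [Finset.sum_eq_single m]
          · rw [coeff_w_pow_diag hv hvc]
          · intro k _ hk
            rcases Nat.lt_or_ge k m with hkm | hkm
            · rw [(IH k hkm).1, zero_mul]
            · rw [coeff_w_pow_lt hv (by omega), mul_zero]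
          · intro hm; exact absurd (Finset.mem_range.mpr (by omega)) hm
        have e2 : coeff (R := S) (2 * m) (X * substInto w Q) = 0 := by
          rcases Nat.eq_zero_or_pos m with rfl | hm
          · simp [coeff_zero_eq_constantCoeff, map_mul, constantCoeff_X]
          · rw [show 2 * m = (2 * m - 1) + 1 by omega, coeff_succ_X_mul, coeff_substInto]
            refine Finset.sum_eq_zero fun k _ => ?_
            rcases Nat.lt_or_ge k m with hkm | hkm
            · rw [(IH k hkm).2, zero_mul]
            · rw [coeff_w_pow_lt hv (by omega), mul_zero]
        rw [e1, e2, add_zero] at h2m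
        exact neg_cancel _ (by rw [mul_comm] at h2m; exact h2m)
      refine ⟨hP, ?_⟩
      have h2m := congrArg (coeff (R := S) (2 * m + 1)) h
      rw [map_add, map_zero, coeff_substInto] at h2m
      have e1 : ∑ k ∈ range (2 * m + 1 + 1), coeff (R := S) k P * coeff (R := S) (2 * m + 1) (w ^ k) = 0 := by
        refine Finset.sum_eq_zero fun k _ => ?_
        rcases Nat.lt_or_ge k (m + 1) with hkm | hkm
        · rcases Nat.lt_or_ge k m with hkm' | hkm'
          · rw [(IH k hkm').1, zero_mul]
          · rw [show k = m by omega, hP, zero_mul]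
        · rw [coeff_w_pow_lt hv (by omega), mul_zero]
      have e2 : coeff (R := S) (2 * m + 1) (X * substInto w Q) = coeff (R := S) m Q * (-1) ^ m := by
        rw [coeff_succ_X_mul, coeff_substInto]
        rw [Finset.sum_eq_single m]
        · rw [coeff_w_pow_diag hv hvc]
        · intro k _ hk
          rcases Nat.lt_or_ge k m with hkm | hkm
          · rw [(IH k hkm).2, zero_mul]
          · rw [coeff_w_pow_lt hv (by omega), mul_zero]
        · intro hm; exact absurd (Finset.mem_range.mpr (by omega)) hm
      rw [e1, e2, zero_add] at h2m
      exact neg_cancel _ (by rw [mul_comm] at h2m; exact h2m)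
  constructor <;> ext m
  · simpa using (key m).1
  · simpa using (key m).2

/-- Injectivity of substitution of `w`. -/
lemma substInto_injOn (hv : w = X ^ 2 * v) (hvc : constantCoeff (R := S) v = -1)
    {P : PowerSeries S} (h : substInto w P = 0) : P = 0 := by
  have : substInto w P + X * substInto w 0 = 0 := by rw [substInto_zero, mul_zero, add_zero, h]
  exact (decomp_unique hv hvc this).1

end Decomp

/-- Power series with zero constant term and nonzerodivisor linear coefficient are
nonzerodivisors. -/
lemma eq_zero_of_mul_eq_zero {h q : PowerSeries S} (h0 : constantCoeff (R := S) h = 0)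
    (h1 : coeff (R := S) 1 h ∈ nonZeroDivisors S) (hq : h * q = 0) : q = 0 := by
  suffices hz : ∀ m, coeff (R := S) m q = 0 by ext m; simp [hz]
  intro m
  induction m using Nat.strong_induction_on with
  | _ m IH =>
    have hm := congrArg (coeff (R := S) (m + 1)) hq
    rw [map_zero, coeff_mul, Finset.sum_eq_single (1, m)] at hm
    · simp only at hm
      exact h1.2 _ (by rwa [mul_comm] at hm)
    · rintro ⟨u, vv⟩ hp hne
      have hp' := Finset.HasAntidiagonal.mem_antidiagonal.mp hp
      simp only at hp' ⊢
      rcases Nat.eq_zero_or_pos u with rfl | hu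
      · rw [coeff_zero_eq_constantCoeff, h0, zero_mul]
      · rcases eq_or_ne u 1 with rfl | hu1
        · have : vv = m := by omega
          subst this
          exact absurd rfl hne
        · rw [IH vv (by omega), mul_zero]
    · intro hmem
      exact absurd (Finset.HasAntidiagonal.mem_antidiagonal.mpr (by omega)) hmem

end AntiFixAux

open AntiFixAux

/-- The antifixed part of the involution `σ : f(u) ↦ f(ū)` is exactly
`(u − ū)·S[[w]]` where `w := u·ū`. -/
theorem antifixed_points_of_conjugation_eq
    {S : Type*} [CommRing S] (h2 : (2 : S) ∈ nonZeroDivisors S)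
    (ubar : PowerSeries S) (h0 : PowerSeries.constantCoeff (R := S) ubar = 0)
    (hcong : ubar + PowerSeries.X ∈ Ideal.span {(PowerSeries.X : PowerSeries S) ^ 2})
    (hinv : PowerSeries.substInto ubar ubar = PowerSeries.X)
    (a : S)
    (ha : Ideal.Quotient.mk (Ideal.span {(2 : S)}) a ∈ nonZeroDivisors (S ⧸ Ideal.span {(2 : S)}))
    (hcong2 : ubar - (PowerSeries.X + PowerSeries.C (R := S) a * PowerSeries.X ^ 2) ∈
      Ideal.span {(2 : PowerSeries S), PowerSeries.X ^ 3})
    (f : PowerSeries S) :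
    PowerSeries.substInto ubar f = -f ↔
      ∃ g : PowerSeries S,
        f = (PowerSeries.X - ubar) * PowerSeries.substInto (PowerSeries.X * ubar) g := by
  classical
  obtain ⟨r, hr⟩ := Ideal.mem_span_singleton.mp hcong
  have hubar : ubar = X ^ 2 * r - X := by rw [← hr]; ring
  set w : PowerSeries S := X * ubar with hwdef
  set v : PowerSeries S := X * r - 1 with hvdef
  have hv : w = X ^ 2 * v := by rw [hwdef, hvdef, hubar]; ring
  have hvc : constantCoeff (R := S) v = -1 := by
    rw [hvdef]; simp [map_sub, map_mul, constantCoeff_X]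
  have hvu : IsUnit v := isUnit_iff_constantCoeff.mpr (by rw [hvc]; exact isUnit_one.neg)
  obtain ⟨V, hV⟩ := hvu
  have hvinv : v * (↑V⁻¹ : PowerSeries S) = 1 := by rw [← hV]; exact V.mul_inv
  have hw0 : constantCoeff (R := S) w = 0 := hw0' hv
  have hσX : substInto ubar X = ubar := substInto_X h0
  have hσw : substInto ubar w = w := by
    rw [hwdef, substInto_mul h0, hσX, hinv, mul_comm]
  have Fix : ∀ g : PowerSeries S, substInto ubar (substInto w g) = substInto w g :=
    substInto_fix h0 hw0 hσw
  -- coefficient facts about ubar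
  have hub1 : coeff (R := S) 1 ubar = -1 := by
    have := congrArg (coeff (R := S) 1) hubar
    rw [map_sub, coeff_X] at this
    have hz : coeff (R := S) 1 ((X : PowerSeries S) ^ 2 * r) = 0 :=
      X_pow_dvd_iff.mp (Dvd.intro _ rfl) 1 one_lt_two
    rw [hz] at this
    simpa using this
  have hXu0 : constantCoeff (R := S) (X - ubar) = 0 := by
    rw [map_sub, constantCoeff_X, h0, sub_zero]
  have hXu1 : coeff (R := S) 1 (X - ubar) = 2 := by
    rw [map_sub, coeff_X, hub1]; norm_num
  have nzdXu : ∀ q : PowerSeries S, (X - ubar) * q = 0 → q = 0 := fun q hq =>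
    eq_zero_of_mul_eq_zero hXu0 (by rw [hXu1]; exact h2) hq
  constructor
  · -- forward direction
    intro hσf
    obtain ⟨P, Q, hPQ⟩ := exists_decomp hv hvinv f
    obtain ⟨A, B, hAB⟩ := exists_decomp hv hvinv (X + ubar)
    have hσXu : substInto ubar (X + ubar) = X + ubar := by
      rw [substInto_add, hσX, hinv, add_comm]
    have hσAB : substInto ubar (X + ubar) = substInto w A + ubar * substInto w B := by
      conv_lhs => rw [hAB]
      rw [substInto_add, substInto_mul h0, hσX, Fix A, Fix B]
    have hB0 : substInto w B = 0 := by
      apply nzdXu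
      have e : substInto w A + ubar * substInto w B = substInto w A + X * substInto w B := by
        rw [← hσAB, hσXu, hAB]
      linear_combination -e
    have hA : substInto w A = X + ubar := by rw [hAB, hB0, mul_zero, add_zero]
    have hA0 : coeff (R := S) 0 A = 0 := by
      have h' := congrArg (coeff (R := S) 0) hA
      rw [coeff_substInto, show (0:ℕ) + 1 = 1 from rfl, Finset.sum_range_one, pow_zero,
        coeff_one, if_pos rfl, map_add, coeff_zero_eq_constantCoeff,
        constantCoeff_X, h0] at h'
      rw [coeff_zero_eq_constantCoeff]
      linear_combination h'
    have hub2 : coeff (R := S) 2 ubar = coeff (R := S) 0 r := by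
      have := congrArg (coeff (R := S) 2) hubar
      rw [map_sub, coeff_X, if_neg (by norm_num)] at this
      have e2 : coeff (R := S) 2 ((X : PowerSeries S) ^ 2 * r) = coeff (R := S) 0 r := by
        have := coeff_X_pow_mul r 2 0
        rwa [zero_add] at this
      rw [e2] at this
      simpa using this
    have hA1 : coeff (R := S) 1 A = -(coeff (R := S) 0 r) := by
      have h' := congrArg (coeff (R := S) 2) hA
      rw [coeff_substInto] at h'
      rw [show (2 : ℕ) + 1 = 3 from rfl, Finset.sum_range_succ, Finset.sum_range_succ,
        Finset.sum_range_succ, Finset.sum_range_zero] at h'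
      rw [coeff_w_pow_lt hv (by norm_num : (2:ℕ) < 2 * 2)] at h'
      have hc21 : coeff (R := S) 2 (w ^ 1) = -1 := by
        have := coeff_w_pow_diag hv hvc 1
        simpa using this
      rw [hc21, pow_zero, coeff_one, if_neg (by norm_num)] at h'
      rw [map_add, coeff_X, if_neg (by norm_num), hub2] at h'
      linear_combination -h'
    -- the relation 2P + A·Q = 0
    have e : substInto w P + ubar * substInto w Q = -(substInto w P + X * substInto w Q) := by
      calc substInto w P + ubar * substInto w Q = substInto ubar f := by
            conv_rhs => rw [hPQ]
            rw [substInto_add, substInto_mul h0, hσX, Fix P, Fix Q]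
        _ = -f := hσf
        _ = -(substInto w P + X * substInto w Q) := by rw [← hPQ]
    have hlin : substInto w (2 * P + A * Q) = 0 := by
      rw [show substInto w (2 * P + A * Q) = substHom w hw0 (2 * P + A * Q) from rfl,
        map_add, map_mul, map_mul, map_ofNat]
      simp only [substHom_apply]
      rw [hA]
      linear_combination e
    have hPQ0 : 2 * P + A * Q = 0 := substInto_injOn hv hvc hlin
    -- the coefficient congruence for r
    obtain ⟨c, d, hcd⟩ := Ideal.mem_span_pair.mp hcong2
    have hr0 : coeff (R := S) 0 r = a + 2 * coeff (R := S) 2 c := by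
      have h' := congrArg (coeff (R := S) 2) hcd
      have e1 : coeff (R := S) 2 (c * 2) = 2 * coeff (R := S) 2 c := by
        rw [show (2 : PowerSeries S) = C (R := S) 2 from (map_ofNat (C (R := S)) 2).symm, mul_comm, coeff_C_mul]
      have e2 : coeff (R := S) 2 (d * X ^ 3) = 0 :=
        X_pow_dvd_iff.mp (dvd_mul_left _ _) 2 (by norm_num)
      rw [map_add, e1, e2, add_zero, map_sub, map_add, hub2, coeff_C_mul, coeff_X,
        if_neg (by norm_num), coeff_X_pow, if_pos rfl] at h'
      linear_combination -h'
    -- every coefficient of Q is divisible by 2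
    have hdvd : ∀ n, (2 : S) ∣ coeff (R := S) n Q := by
      intro n
      induction n using Nat.strong_induction_on with
      | _ n IH =>
        have hc := congrArg (coeff (R := S) (n + 1)) hPQ0
        have e1 : coeff (R := S) (n + 1) (2 * P) = 2 * coeff (R := S) (n + 1) P := by
          rw [show (2 : PowerSeries S) = C (R := S) 2 from (map_ofNat (C (R := S)) 2).symm, coeff_C_mul]
        rw [map_add, map_zero, e1, coeff_mul] at hc
        have hmem : ((1 : ℕ), n) ∈ Finset.HasAntidiagonal.antidiagonal (n + 1) :=
          Finset.HasAntidiagonal.mem_antidiagonal.mpr (by omega)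
        rw [← Finset.add_sum_erase _ _ hmem] at hc
        have hterm : (2 : S) ∣ ∑ p ∈ (Finset.HasAntidiagonal.antidiagonal (n + 1)).erase (1, n),
            coeff (R := S) p.1 A * coeff (R := S) p.2 Q := by
          refine Finset.dvd_sum ?_
          rintro ⟨u, vv⟩ hp
          obtain ⟨hne, hmem'⟩ := Finset.mem_erase.mp hp
          have huv := Finset.HasAntidiagonal.mem_antidiagonal.mp hmem'
          simp only at huv ⊢
          rcases Nat.eq_zero_or_pos u with rfl | hu
          · rw [hA0, zero_mul]
            exact dvd_zero 2
          · rcases eq_or_ne u 1 with rfl | hu1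
            · have : vv = n := by omega
              subst this
              exact absurd rfl hne
            · exact Dvd.dvd.mul_left (IH vv (by omega)) _
        have hd1 : (2 : S) ∣ coeff (R := S) 1 A * coeff (R := S) n Q := by
          have heq : coeff (R := S) 1 A * coeff (R := S) n Q =
              -(2 * coeff (R := S) (n + 1) P) - ∑ p ∈ (Finset.HasAntidiagonal.antidiagonal (n + 1)).erase (1, n),
                coeff (R := S) p.1 A * coeff (R := S) p.2 Q := by linear_combination hc
          rw [heq]
          exact dvd_sub (dvd_neg.mpr ⟨coeff (R := S) (n + 1) P, rfl⟩) hterm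
        have hd2 : (2 : S) ∣ a * coeff (R := S) n Q := by
          have heq : a * coeff (R := S) n Q =
              -(coeff (R := S) 1 A * coeff (R := S) n Q) - 2 * (coeff (R := S) 2 c * coeff (R := S) n Q) := by
            rw [hA1, hr0]; ring
          rw [heq]
          exact dvd_sub (dvd_neg.mpr hd1) ⟨_, rfl⟩
        have hq0 : Ideal.Quotient.mk (Ideal.span {(2 : S)}) (a * coeff (R := S) n Q) = 0 :=
          Ideal.Quotient.eq_zero_iff_mem.mpr (Ideal.mem_span_singleton.mpr hd2)
        rw [map_mul, mul_comm] at hq0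
        exact Ideal.mem_span_singleton.mp (Ideal.Quotient.eq_zero_iff_mem.mp (ha.2 _ hq0))
    choose gc hgc using hdvd
    have hQg : Q = 2 * mk gc := by
      ext n
      rw [show (2 : PowerSeries S) = C (R := S) 2 from (map_ofNat (C (R := S)) 2).symm, coeff_C_mul, coeff_mk]
      exact hgc n
    have hsum : 2 * (P + A * mk gc) = 0 := by
      rw [hQg] at hPQ0
      linear_combination hPQ0
    have hPg : P = -(A * mk gc) := by
      have hz : P + A * mk gc = 0 := by
        ext n
        have h' := congrArg (coeff (R := S) n) hsum
        rw [map_zero, show (2 : PowerSeries S) = C (R := S) 2 from (map_ofNat (C (R := S)) 2).symm,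
          coeff_C_mul] at h'
        rw [map_zero]
        exact h2.2 _ (by rwa [mul_comm] at h')
      linear_combination hz
    refine ⟨mk gc, ?_⟩
    have e3 : substInto w (-(A * mk gc)) = -(substInto w A * substInto w (mk gc)) := by
      rw [show substInto w (-(A * mk gc)) = substHom w hw0 (-(A * mk gc)) from rfl, map_neg,
        map_mul]
      rfl
    have e4 : substInto w (2 * mk gc) = 2 * substInto w (mk gc) := by
      rw [show substInto w (2 * mk gc) = substHom w hw0 (2 * mk gc) from rfl, map_mul, map_ofNat]
      rfl
    rw [hPQ, hPg, hQg, e3, e4, hA]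
    ring
  · -- reverse direction
    rintro ⟨g, rfl⟩
    rw [substInto_mul h0, substInto_sub h0, hσX, hinv, Fix g]
    ring
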